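/- Let V : ℝ² → ℝ be bounded, nonnegative, supported in B_ρ(q'e₂) ∪ B_ρ(-q'e₂) for some ρ > 0 and q' > 2ρ. Define the operator K(ψ)(y) = (1/2π) ∫_{ℝ²₊} log(|z - ȳ|/|z - y|) V(z) ψ(z) dz for y in the upper half-plane ℝ²₊, where ȳ = (y₁, -y₂) is the reflection. Then for every bounded measurable ψ on ℝ²₊, the gradient bound ‖∇Kψ‖_{L^∞(ℝ²₊)} ≤ C ‖V‖_∞ ρ² ‖ψ‖_{L^∞(B_ρ(q'e₂))} holds for an absolute constant C (depending only on the geometry through ρ and q'). -/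

import Mathlib

open Real MeasureTheory
open scoped ENNReal

/-- Euclidean norm on `ℝ × ℝ`. -/
noncomputable def nrm (v : ℝ × ℝ) : ℝ := Real.sqrt (v.1 ^ 2 + v.2 ^ 2)

lemma nrm_eq_cabs (v : ℝ × ℝ) : nrm v = ‖(⟨v.1, v.2⟩ : ℂ)‖ := by
  simp [nrm, Complex.norm_def, Complex.normSq_mk]
  ring_nf

lemma nrm_nonneg (v : ℝ × ℝ) : 0 ≤ nrm v := Real.sqrt_nonneg _

lemma nrm_add_le (u v : ℝ × ℝ) : nrm (u + v) ≤ nrm u + nrm v := by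
  simp only [nrm_eq_cabs]
  convert norm_add_le (⟨u.1, u.2⟩ : ℂ) ⟨v.1, v.2⟩ using 2 <;> rfl

lemma nrm_eq_zero_iff {v : ℝ × ℝ} : nrm v = 0 ↔ v = 0 := by
  rw [nrm_eq_cabs, norm_eq_zero, Complex.ext_iff, Prod.ext_iff]
  simp

lemma nrm_neg (v : ℝ × ℝ) : nrm (-v) = nrm v := by simp [nrm]

lemma abs_fst_le_nrm (v : ℝ × ℝ) : |v.1| ≤ nrm v := by
  rw [← Real.sqrt_sq_eq_abs]
  exact Real.sqrt_le_sqrt (by nlinarith [sq_nonneg v.2])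

lemma abs_snd_le_nrm (v : ℝ × ℝ) : |v.2| ≤ nrm v := by
  rw [← Real.sqrt_sq_eq_abs]
  exact Real.sqrt_le_sqrt (by nlinarith [sq_nonneg v.1])

lemma continuous_nrm : Continuous nrm := by
  unfold nrm; fun_prop

lemma nrm_sub_le (u v w : ℝ × ℝ) : nrm (u - w) ≤ nrm (u - v) + nrm (v - w) := by
  have := nrm_add_le (u - v) (v - w)
  simpa using this

lemma abs_nrm_sub_nrm_le (u v : ℝ × ℝ) : |nrm u - nrm v| ≤ nrm (u - v) := by
  have hsym : nrm (v - u) = nrm (u - v) := by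
    rw [← nrm_neg (u - v)]; congr 1; ring
  have h1 := nrm_add_le v (u - v)
  have e1 : v + (u - v) = u := by ring
  rw [e1] at h1
  have h2 := nrm_add_le u (v - u)
  have e2 : u + (v - u) = v := by ring
  rw [e2, hsym] at h2
  rw [abs_le]; constructor <;> linarith

lemma nrm_le_sqrt2_norm (v : ℝ × ℝ) : nrm v ≤ 2 * ‖v‖ := by
  have h1 : |v.1| ≤ ‖v‖ := by
    rw [Prod.norm_def]; exact le_max_left _ _ |>.trans_eq' (by simp [Real.norm_eq_abs])
  have h2 : |v.2| ≤ ‖v‖ := by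
    rw [Prod.norm_def]; exact le_max_right _ _ |>.trans_eq' (by simp [Real.norm_eq_abs])
  have : nrm v ≤ Real.sqrt (2 * ‖v‖^2) := by
    apply Real.sqrt_le_sqrt
    nlinarith [abs_nonneg v.1, abs_nonneg v.2, sq_abs v.1, sq_abs v.2]
  refine this.trans ?_
  rw [show (2:ℝ) * ‖v‖^2 = (2*‖v‖) * ‖v‖ by ring]
  have h0 : (0:ℝ) ≤ ‖v‖ := norm_nonneg v
  calc Real.sqrt ((2*‖v‖) * ‖v‖) ≤ Real.sqrt ((2*‖v‖)*(2*‖v‖)) := by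
        apply Real.sqrt_le_sqrt; nlinarith
    _ = 2*‖v‖ := Real.sqrt_mul_self (by linarith)


lemma nrm_pos_of_ne {u v : ℝ × ℝ} (h : u ≠ v) : 0 < nrm (u - v) :=
  lt_of_le_of_ne (nrm_nonneg _) fun h0 => h (sub_eq_zero.mp (nrm_eq_zero_iff.mp h0.symm))

lemma nrm_reflect (a b : ℝ) : nrm (a, -b) = nrm (a, b) := by simp [nrm]

lemma abs_log_le {t : ℝ} (ht : 0 < t) : |Real.log t| ≤ t + t⁻¹ := by
  have h1 := Real.log_le_sub_one_of_pos ht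
  have h2 := Real.log_le_sub_one_of_pos (inv_pos.mpr ht)
  rw [Real.log_inv] at h2
  have h3 : 0 < t⁻¹ := inv_pos.mpr ht
  rw [abs_le]; constructor <;> linarith

lemma abs_log_sub_log_le {a b : ℝ} (ha : 0 < a) (hb : 0 < b) :
    |Real.log a - Real.log b| ≤ |a - b| * (a⁻¹ + b⁻¹) := by
  have hab := Real.log_le_sub_one_of_pos (div_pos ha hb)
  have hba := Real.log_le_sub_one_of_pos (div_pos hb ha)
  rw [Real.log_div ha.ne' hb.ne'] at hab
  rw [Real.log_div hb.ne' ha.ne'] at hba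
  have ha' := inv_pos.mpr ha
  have hb' := inv_pos.mpr hb
  have e1 : a / b - 1 = (a - b) * b⁻¹ := by field_simp
  have e2 : b / a - 1 = (b - a) * a⁻¹ := by field_simp
  rw [e1] at hab; rw [e2] at hba
  rw [abs_le]; constructor
  · nlinarith [le_abs_self (b - a), abs_sub_comm a b, abs_nonneg (a - b)]
  · nlinarith [le_abs_self (a - b), abs_nonneg (a - b)]

lemma kernel_diff_bound {a b a' b' d : ℝ} (ha : 0 < a) (hb : 0 < b) (ha' : 0 < a')
    (hb' : 0 < b') (hda : |a - a'| ≤ d) (hdb : |b - b'| ≤ d) :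
    |Real.log (a / b) - Real.log (a' / b')| ≤ d * (a⁻¹ + a'⁻¹ + b⁻¹ + b'⁻¹) := by
  rw [Real.log_div ha.ne' hb.ne', Real.log_div ha'.ne' hb'.ne']
  have h1 := abs_log_sub_log_le ha ha'
  have h2 := abs_log_sub_log_le hb hb'
  have e : Real.log a - Real.log b - (Real.log a' - Real.log b')
      = (Real.log a - Real.log a') - (Real.log b - Real.log b') := by ring
  rw [e]
  refine (abs_sub _ _).trans ?_
  have hia := inv_pos.mpr ha
  have hia' := inv_pos.mpr ha'
  have hib := inv_pos.mpr hb
  have hib' := inv_pos.mpr hb'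
  have hd0 : 0 ≤ d := (abs_nonneg _).trans hda
  nlinarith [abs_nonneg (a - a'), abs_nonneg (b - b'),
    mul_le_mul_of_nonneg_right hda (le_of_lt (by positivity : (0:ℝ) < a⁻¹ + a'⁻¹)),
    mul_le_mul_of_nonneg_right hdb (le_of_lt (by positivity : (0:ℝ) < b⁻¹ + b'⁻¹))]


lemma measurable_nrm_sub (p : ℝ × ℝ) : Measurable fun z => nrm (z - p) :=
  (continuous_nrm.comp (continuous_id.sub continuous_const)).measurable

lemma isOpen_nrm_ball (p : ℝ × ℝ) (r : ℝ) : IsOpen {z | nrm (z - p) < r} :=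
  isOpen_lt (continuous_nrm.comp (continuous_id.sub continuous_const)) continuous_const

lemma measurableSet_nrm_ball (p : ℝ × ℝ) (r : ℝ) : MeasurableSet {z | nrm (z - p) < r} :=
  (isOpen_nrm_ball p r).measurableSet

lemma volume_nrm_ball_le (p : ℝ × ℝ) {r : ℝ} (hr : 0 ≤ r) :
    volume {z | nrm (z - p) < r} ≤ ENNReal.ofReal (2*r) * ENNReal.ofReal (2*r) := by
  have hsub : {z | nrm (z - p) < r} ⊆ Set.Ioo (p.1 - r) (p.1 + r) ×ˢ Set.Ioo (p.2 - r) (p.2 + r) := by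
    intro z hz
    have h1 := (abs_fst_le_nrm (z - p)).trans_lt hz
    have h2 := (abs_snd_le_nrm (z - p)).trans_lt hz
    simp only [Prod.fst_sub, Prod.snd_sub, abs_lt] at h1 h2
    constructor <;> constructor <;> simp_all <;> linarith
  refine (measure_mono hsub).trans ?_
  rw [Measure.volume_eq_prod ℝ ℝ]
  rw [Measure.prod_prod, Real.volume_Ioo, Real.volume_Ioo]
  apply le_of_eq
  congr 1 <;> congr 1 <;> ring

lemma volume_singleton (p : ℝ × ℝ) : volume ({p} : Set (ℝ × ℝ)) = 0 := by
  have : ({p} : Set (ℝ × ℝ)) = {p.1} ×ˢ {p.2} := by ext z; simp [Prod.ext_iff]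
  rw [this, Measure.volume_eq_prod ℝ ℝ,
    Measure.prod_prod]
  simp

lemma core_lintegral (p : ℝ × ℝ) {ρ : ℝ} (hρ : 0 < ρ) :
    ∫⁻ z in {z | nrm (z - p) < ρ}, ENNReal.ofReal (nrm (z - p))⁻¹ ≤ ENNReal.ofReal (16*ρ) := by
  set f : ℝ × ℝ → ℝ≥0∞ := fun z => ENNReal.ofReal (nrm (z - p))⁻¹ with hf
  set A : ℕ → Set (ℝ × ℝ) := fun n => {z | ρ/2^(n+1) ≤ nrm (z - p) ∧ nrm (z - p) < ρ/2^n} with hA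
  have hsub : {z | nrm (z - p) < ρ} ⊆ {p} ∪ ⋃ n, A n := by
    intro z hz
    rcases eq_or_ne (nrm (z - p)) 0 with h0 | h0
    · left
      have : z - p = 0 := nrm_eq_zero_iff.mp h0
      have : z = p := by
        have := sub_eq_zero.mp this; exact this
      simp [this]
    · right
      have hpos : 0 < nrm (z - p) := lt_of_le_of_ne (nrm_nonneg _) (Ne.symm h0)
      have hex : ∃ n : ℕ, ρ / 2^(n+1) ≤ nrm (z - p) := by
        obtain ⟨n, hn⟩ := pow_unbounded_of_one_lt (ρ / nrm (z - p)) (one_lt_two (α := ℝ))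
        refine ⟨n, ?_⟩
        rw [div_le_iff₀ (by positivity)]
        rw [div_lt_iff₀ hpos] at hn
        have h2 : (2:ℝ)^(n+1) = 2*2^n := by ring
        nlinarith [pow_pos (zero_lt_two (α := ℝ)) n, hpos]
      refine Set.mem_iUnion.mpr ⟨Nat.find hex, Nat.find_spec hex, ?_⟩
      rcases Nat.eq_zero_or_pos (Nat.find hex) with h | h
      · rw [h]; simpa using hz
      · obtain ⟨m, hm⟩ := Nat.exists_eq_succ_of_ne_zero h.ne'
        have := Nat.find_min hex (m := m) (by omega)
        push_neg at this
        rw [hm]; exact this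
  calc ∫⁻ z in {z | nrm (z - p) < ρ}, f z ≤ ∫⁻ z in {p} ∪ ⋃ n, A n, f z :=
        lintegral_mono_set hsub
    _ ≤ (∫⁻ z in ({p} : Set (ℝ × ℝ)), f z) + ∫⁻ z in ⋃ n, A n, f z := lintegral_union_le _ _ _
    _ ≤ 0 + ∑' n, ∫⁻ z in A n, f z := by
        gcongr
        · rw [Measure.restrict_eq_zero.mpr (volume_singleton p)]; simp
        · exact lintegral_iUnion_le _ _
    _ ≤ ∑' n, ENNReal.ofReal (16 * ρ * (1/2)^n / 2) := by
        rw [zero_add]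
        gcongr with n
        have hb : ∀ z ∈ A n, f z ≤ ENNReal.ofReal (ρ/2^(n+1))⁻¹ := by
          intro z hz
          exact ENNReal.ofReal_le_ofReal (by
            apply inv_anti₀ (by positivity) hz.1)
        calc ∫⁻ z in A n, f z ≤ ∫⁻ _ in A n, ENNReal.ofReal (ρ/2^(n+1))⁻¹ :=
              setLIntegral_mono measurable_const hb
          _ = ENNReal.ofReal (ρ/2^(n+1))⁻¹ * volume (A n) := setLIntegral_const _ _
          _ ≤ ENNReal.ofReal (ρ/2^(n+1))⁻¹ *
                (ENNReal.ofReal (2*(ρ/2^n)) * ENNReal.ofReal (2*(ρ/2^n))) := by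
              gcongr
              refine (measure_mono ?_).trans (volume_nrm_ball_le p (by positivity))
              intro z hz; exact hz.2
          _ = ENNReal.ofReal (16 * ρ * (1/2)^n / 2) := by
              rw [← ENNReal.ofReal_mul (by positivity), ← ENNReal.ofReal_mul (by positivity)]
              congr 1
              rw [one_div, inv_pow]
              field_simp
              ring
    _ ≤ ENNReal.ofReal (16*ρ) := by
        have : ∀ n : ℕ, ENNReal.ofReal (16 * ρ * (1/2)^n / 2) =
            ENNReal.ofReal (8*ρ) * (ENNReal.ofReal (1/2))^n := by
          intro n
          rw [← ENNReal.ofReal_pow (by norm_num), ← ENNReal.ofReal_mul (by positivity)]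
          congr 1; ring
        simp_rw [this]
        rw [ENNReal.tsum_mul_left, ENNReal.tsum_geometric]
        have h2 : (1 : ℝ≥0∞) - ENNReal.ofReal (1/2) = ENNReal.ofReal (1/2) := by
          rw [show (1:ℝ≥0∞) = ENNReal.ofReal 1 by simp, ← ENNReal.ofReal_sub _ (by norm_num)]
          norm_num
        rw [h2]
        rw [show (ENNReal.ofReal (1/2))⁻¹ = ENNReal.ofReal 2 by
          rw [← ENNReal.ofReal_inv_of_pos (by norm_num)]; norm_num]
        rw [← ENNReal.ofReal_mul (by positivity)]
        apply ENNReal.ofReal_le_ofReal; linarith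


lemma volume_nrm_ball_lt_top (p : ℝ × ℝ) {r : ℝ} (hr : 0 ≤ r) :
    volume {z | nrm (z - p) < r} < ⊤ :=
  (volume_nrm_ball_le p hr).trans_lt (by finiteness)

lemma inv_integrableOn_ball (p : ℝ × ℝ) {r : ℝ} (hr : 0 < r) :
    IntegrableOn (fun z => (nrm (z - p))⁻¹) {z | nrm (z - p) < r} := by
  refine ⟨((measurable_nrm_sub p).inv).aestronglyMeasurable, ?_⟩
  rw [hasFiniteIntegral_iff_norm]
  calc ∫⁻ z in {z | nrm (z - p) < r}, ENNReal.ofReal ‖(nrm (z - p))⁻¹‖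
      = ∫⁻ z in {z | nrm (z - p) < r}, ENNReal.ofReal (nrm (z - p))⁻¹ := by
        apply lintegral_congr; intro z
        rw [Real.norm_eq_abs, abs_of_nonneg (inv_nonneg.mpr (nrm_nonneg _))]
    _ ≤ ENNReal.ofReal (16*r) := core_lintegral p hr
    _ < ⊤ := ENNReal.ofReal_lt_top

lemma inv_setIntegral_ball_le (p : ℝ × ℝ) {r : ℝ} (hr : 0 < r) :
    ∫ z in {z | nrm (z - p) < r}, (nrm (z - p))⁻¹ ≤ 16*r := by
  rw [integral_eq_lintegral_of_nonneg_ae (ae_of_all _ fun z => inv_nonneg.mpr (nrm_nonneg _))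
      ((measurable_nrm_sub p).inv).aestronglyMeasurable]
  exact ENNReal.toReal_le_of_le_ofReal (by positivity) (core_lintegral p hr)

lemma inv_integrableOn (p c : ℝ × ℝ) {r : ℝ} (hr : 0 < r) :
    IntegrableOn (fun z => (nrm (z - p))⁻¹) {z | nrm (z - c) < r} := by
  rw [← Set.inter_union_diff {z | nrm (z - c) < r} {z | nrm (z - p) < r}]
  apply IntegrableOn.union
  · exact (inv_integrableOn_ball p hr).mono_set Set.inter_subset_right
  · have hmeas : MeasurableSet ({z | nrm (z - c) < r} \ {z | nrm (z - p) < r}) :=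
      (measurableSet_nrm_ball c r).diff (measurableSet_nrm_ball p r)
    apply Integrable.mono' (g := fun _ => r⁻¹)
    · exact (integrableOn_const_iff).mpr (Or.inr
        ((measure_mono Set.diff_subset).trans_lt (volume_nrm_ball_lt_top c hr.le)))
    · exact ((measurable_nrm_sub p).inv).aestronglyMeasurable
    · refine (ae_restrict_iff' hmeas).mpr (ae_of_all _ fun z hz => ?_)
      rw [Real.norm_eq_abs, abs_of_nonneg (inv_nonneg.mpr (nrm_nonneg _))]
      exact inv_anti₀ hr (not_lt.mp hz.2)

lemma inv_setIntegral_le (p c : ℝ × ℝ) {r : ℝ} (hr : 0 < r) :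
    ∫ z in {z | nrm (z - c) < r}, (nrm (z - p))⁻¹ ≤ 20*r := by
  have hint := inv_integrableOn p c (r := r) hr
  have hS := measurableSet_nrm_ball c r
  have hB := measurableSet_nrm_ball p r
  have hsplit : {z : ℝ × ℝ | nrm (z - c) < r} =
      ({z | nrm (z - c) < r} ∩ {z | nrm (z - p) < r}) ∪
      ({z | nrm (z - c) < r} \ {z | nrm (z - p) < r}) :=
    (Set.inter_union_diff _ _).symm
  rw [hsplit] at hint ⊢
  obtain ⟨h1, h2⟩ := (integrableOn_union.mp hint)
  rw [setIntegral_union (Set.disjoint_sdiff_right.mono_left Set.inter_subset_right)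
      (hS.diff hB) h1 h2]
  have e1 : ∫ z in {z | nrm (z - c) < r} ∩ {z | nrm (z - p) < r}, (nrm (z - p))⁻¹ ≤ 16*r := by
    refine le_trans (setIntegral_mono_set (inv_integrableOn_ball p hr)
      (ae_of_all _ fun z => inv_nonneg.mpr (nrm_nonneg _))
      (HasSubset.Subset.eventuallyLE Set.inter_subset_right)) ?_
    exact inv_setIntegral_ball_le p hr
  have e2 : ∫ z in {z | nrm (z - c) < r} \ {z | nrm (z - p) < r}, (nrm (z - p))⁻¹ ≤ 4*r := by
    have hb : ∀ z ∈ {z : ℝ × ℝ | nrm (z - c) < r} \ {z | nrm (z - p) < r},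
        (nrm (z - p))⁻¹ ≤ r⁻¹ := fun z hz => inv_anti₀ hr (not_lt.mp hz.2)
    refine le_trans (setIntegral_mono_on h2 ((integrableOn_const_iff).mpr (Or.inr
      ((measure_mono Set.diff_subset).trans_lt (volume_nrm_ball_lt_top c hr.le))))
      (hS.diff hB) hb) ?_
    rw [setIntegral_const]
    have hv : (volume ({z : ℝ × ℝ | nrm (z - c) < r} \ {z | nrm (z - p) < r})).toReal
        ≤ 4*r^2 := by
      have : volume ({z : ℝ × ℝ | nrm (z - c) < r} \ {z | nrm (z - p) < r})
          ≤ ENNReal.ofReal (2*r) * ENNReal.ofReal (2*r) :=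
        (measure_mono Set.diff_subset).trans (volume_nrm_ball_le c hr.le)
      have h4 : ENNReal.ofReal (2*r) * ENNReal.ofReal (2*r) = ENNReal.ofReal (4*r^2) := by
        rw [← ENNReal.ofReal_mul (by positivity)]; congr 1; ring
      rw [h4] at this
      exact ENNReal.toReal_le_of_le_ofReal (by positivity) this
    rw [smul_eq_mul]
    calc (volume _).toReal * r⁻¹ ≤ (4*r^2) * r⁻¹ := by
          apply mul_le_mul_of_nonneg_right hv (inv_nonneg.mpr hr.le)
      _ = 4*r := by field_simp
  linarith


lemma ae_ne_pt (w : ℝ × ℝ) : ∀ᵐ z : ℝ × ℝ, z ≠ w := by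
  rw [ae_iff]
  convert volume_singleton w using 2
  ext z; simp

/-- Gradient bound for the half-plane Green operator
`Kψ(y) = (1/2π)∫_{ℝ²₊} log(|z-ȳ|/|z-y|) V(z)ψ(z) dz`:
`‖∇Kψ‖_∞ ≤ C ‖V‖_∞ ρ² ‖ψ‖_{L∞(B_ρ(q'e₂))}`, with `C` depending only on `ρ` and `q'`. -/
theorem stmt10 (ρ q' : ℝ) (hρ : 0 < ρ) (hq' : 2 * ρ < q') :
    ∃ C > 0, ∀ V ψ : ℝ × ℝ → ℝ, ∀ CV Cψ B : ℝ,
      Measurable V → Measurable ψ →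
      (∀ z, 0 ≤ V z) → (∀ z, |V z| ≤ CV) →
      (Function.support V ⊆
        {z : ℝ × ℝ | nrm (z - (0, q')) < ρ} ∪ {z : ℝ × ℝ | nrm (z - (0, -q')) < ρ}) →
      (∀ z, |ψ z| ≤ B) →
      (∀ z : ℝ × ℝ, nrm (z - (0, q')) < ρ → |ψ z| ≤ Cψ) →
      ∀ y : ℝ × ℝ, 0 < y.2 →
        ‖fderiv ℝ (fun w : ℝ × ℝ =>
            (1 / (2 * π)) * ∫ z in {z : ℝ × ℝ | 0 < z.2},
              Real.log (nrm (z - (w.1, -w.2)) / nrm (z - w)) * (V z * ψ z)) y‖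
          ≤ C * CV * ρ ^ 2 * Cψ := by
  refine ⟨160 / ρ, by positivity, ?_⟩
  intro V ψ CV Cψ B hV hψ hV0 hVb hsupp hψB hψb y hy
  have hCV : 0 ≤ CV := (abs_nonneg _).trans (hVb 0)
  have hCψ : 0 ≤ Cψ := (abs_nonneg _).trans (hψb (0, q') (by
    simp only [sub_self]
    simpa [nrm] using hρ))
  set c : ℝ × ℝ := (0, q') with hc
  set S : Set (ℝ × ℝ) := {z | nrm (z - c) < ρ} with hSdef
  set U : Set (ℝ × ℝ) := {z : ℝ × ℝ | 0 < z.2} with hUdef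
  have hUmeas : MeasurableSet U := measurableSet_lt measurable_const measurable_snd
  have hSmeas : MeasurableSet S := measurableSet_nrm_ball c ρ
  have hSz : ∀ z ∈ S, q' - ρ < z.2 := by
    intro z hz
    have h := (abs_snd_le_nrm (z - c)).trans_lt hz
    have h2 : (z - c).2 = z.2 - q' := by simp [hc]
    rw [h2, abs_lt] at h
    linarith [h.1]
  have hSU : S ⊆ U := fun z hz => by
    have := hSz z hz
    simp only [hUdef, Set.mem_setOf_eq]
    linarith
  set g : ℝ × ℝ → ℝ := fun z => V z * ψ z with hgdef
  have hgz : ∀ z ∈ U, z ∉ S → g z = 0 := by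
    intro z hzU hzS
    have hVz : V z = 0 := by
      by_contra h
      rcases hsupp (Function.mem_support.mpr h) with h1 | h1
      · exact hzS h1
      · have hb := (abs_snd_le_nrm (z - ((0:ℝ), -q'))).trans_lt h1
        have h2 : (z - ((0:ℝ), -q')).2 = z.2 + q' := by simp
        rw [h2, abs_lt] at hb
        have : (0:ℝ) < z.2 := hzU
        linarith [hb.2]
    simp [hgdef, hVz]
  set K : (ℝ × ℝ) → (ℝ × ℝ) → ℝ :=
    fun w z => Real.log (nrm (z - (w.1, -w.2)) / nrm (z - w)) with hKdef
  have hKmeas : ∀ w, Measurable fun z => K w z * g z := by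
    intro w
    exact ((Real.measurable_log.comp
      ((measurable_nrm_sub (w.1, -w.2)).div (measurable_nrm_sub w))).mul (hV.mul hψ))
  have hres : ∀ w, (∫ z in U, K w z * g z) = ∫ z in S, K w z * g z := by
    intro w
    rw [← integral_indicator hUmeas, ← integral_indicator hSmeas]
    congr 1
    funext z
    by_cases hzS : z ∈ S
    · rw [Set.indicator_of_mem hzS, Set.indicator_of_mem (hSU hzS)]
    · by_cases hzU : z ∈ U
      · rw [Set.indicator_of_mem hzU, Set.indicator_of_notMem hzS, hgz z hzU hzS, mul_zero]
      · rw [Set.indicator_of_notMem hzU, Set.indicator_of_notMem hzS]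
  -- positivity of reflected distance on S
  have haz : ∀ w : ℝ × ℝ, 0 < w.2 → ∀ z ∈ S, 0 < nrm (z - (w.1, -w.2)) := by
    intro w hw z hz
    have hzz := hSz z hz
    have h2 : (z - (w.1, -w.2)).2 = z.2 + w.2 := by simp
    calc (0:ℝ) < |(z - (w.1, -w.2)).2| := by rw [h2]; rw [abs_pos]; intro h; linarith
      _ ≤ _ := abs_snd_le_nrm _
  have hgb : ∀ z ∈ S, |g z| ≤ CV * Cψ := by
    intro z hz
    rw [hgdef, abs_mul]
    exact mul_le_mul (hVb z) (hψb z hz) (abs_nonneg _) hCV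
  -- integrability of the kernel * g on S
  have key : ∀ w : ℝ × ℝ, 0 < w.2 → IntegrableOn (fun z => K w z * g z) S := by
    intro w hw
    set R : ℝ := ρ + nrm (c - w) + nrm (c - (w.1, -w.2)) with hRdef
    have hR : 0 < R := by
      have := nrm_nonneg (c - w); have := nrm_nonneg (c - (w.1, -w.2)); positivity
    apply Integrable.mono'
      (g := fun z => CV * Cψ * (2 * R + (nrm (z - (w.1, -w.2)))⁻¹ + (nrm (z - w))⁻¹))
    · apply Integrable.const_mul
      apply Integrable.add
      apply Integrable.add
      · exact (integrableOn_const_iff).mpr (Or.inr (volume_nrm_ball_lt_top c hρ.le))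
      · exact inv_integrableOn _ c hρ
      · exact inv_integrableOn _ c hρ
    · exact (hKmeas w).aestronglyMeasurable
    · filter_upwards [ae_restrict_mem hSmeas, ae_restrict_of_ae (ae_ne_pt w)] with z hzS hzw
      have ha := haz w hw z hzS
      have hb := nrm_pos_of_ne hzw
      have hra : nrm (z - (w.1, -w.2)) ≤ R := by
        refine (nrm_sub_le z c (w.1, -w.2)).trans ?_
        have h1 : nrm (z - c) ≤ ρ := le_of_lt hzS
        have := nrm_nonneg (c - w)
        linarith
      have hrb : nrm (z - w) ≤ R := by
        refine (nrm_sub_le z c w).trans ?_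
        have h1 : nrm (z - c) ≤ ρ := le_of_lt hzS
        have := nrm_nonneg (c - (w.1, -w.2))
        linarith
      rw [Real.norm_eq_abs, abs_mul]
      have hKb : |K w z| ≤ 2 * R + (nrm (z - (w.1, -w.2)))⁻¹ + (nrm (z - w))⁻¹ := by
        rw [hKdef]
        simp only
        rw [Real.log_div ha.ne' hb.ne']
        refine (abs_sub _ _).trans ?_
        have h1 := abs_log_le ha
        have h2 := abs_log_le hb
        linarith
      calc |K w z| * |g z| ≤ (2 * R + (nrm (z - (w.1, -w.2)))⁻¹ + (nrm (z - w))⁻¹) * (CV * Cψ) := by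
            apply mul_le_mul hKb (hgb z hzS) (abs_nonneg _)
            have := inv_nonneg.mpr (nrm_nonneg (z - (w.1, -w.2)))
            have := inv_nonneg.mpr (nrm_nonneg (z - w))
            linarith
        _ = CV * Cψ * (2 * R + (nrm (z - (w.1, -w.2)))⁻¹ + (nrm (z - w))⁻¹) := by ring
  -- Lipschitz estimate
  apply norm_fderiv_le_of_lip' ℝ (by positivity)
  rw [Metric.eventually_nhds_iff]
  refine ⟨y.2 / 2, by linarith, fun w hdist => ?_⟩
  have hwy2 : |w.2 - y.2| < y.2 / 2 := by
    calc |w.2 - y.2| = dist w.2 y.2 := by rw [Real.dist_eq]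
      _ ≤ dist w y := le_max_right _ _
      _ < y.2 / 2 := hdist
  have hw2 : 0 < w.2 := by
    rw [abs_lt] at hwy2
    linarith [hwy2.1]
  rw [hres w, hres y, ← mul_sub,
    ← integral_sub (key w hw2) (key y hy), Real.norm_eq_abs, abs_mul]
  set d : ℝ := nrm (w - y) with hddef
  have hd0 : 0 ≤ d := nrm_nonneg _
  set G : (ℝ × ℝ) → ℝ := fun z => CV * Cψ * d *
    ((nrm (z - (w.1, -w.2)))⁻¹ + (nrm (z - (y.1, -y.2)))⁻¹ +
     (nrm (z - w))⁻¹ + (nrm (z - y))⁻¹) with hGdef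
  have hGint : IntegrableOn G S := by
    apply Integrable.const_mul
    exact (((inv_integrableOn _ c hρ).add (inv_integrableOn _ c hρ)).add
      (inv_integrableOn _ c hρ)).add (inv_integrableOn _ c hρ)
  have hptw : ∀ᵐ z ∂(volume.restrict S), |K w z * g z - K y z * g z| ≤ G z := by
    filter_upwards [ae_restrict_mem hSmeas, ae_restrict_of_ae (ae_ne_pt w),
      ae_restrict_of_ae (ae_ne_pt y)] with z hzS hzw hzy
    have haw := haz w hw2 z hzS
    have hay := haz y hy z hzS
    have hbw := nrm_pos_of_ne hzw
    have hby := nrm_pos_of_ne hzy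
    have hda : |nrm (z - (w.1, -w.2)) - nrm (z - (y.1, -y.2))| ≤ d := by
      refine (abs_nrm_sub_nrm_le _ _).trans ?_
      have he : z - (w.1, -w.2) - (z - (y.1, -y.2)) = (y.1 - w.1, -(y.2 - w.2)) := by
        ext <;> simp <;> ring
      rw [he, nrm_reflect, hddef]
      have he2 : ((y.1 - w.1, y.2 - w.2) : ℝ × ℝ) = -(w - y) := by
        ext <;> simp <;> ring
      rw [he2, nrm_neg]
    have hdb : |nrm (z - w) - nrm (z - y)| ≤ d := by
      refine (abs_nrm_sub_nrm_le _ _).trans ?_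
      have he : z - w - (z - y) = -(w - y) := by ring
      rw [he, nrm_neg]
    have hK := kernel_diff_bound haw hbw hay hby hda hdb
    have e : K w z * g z - K y z * g z = (K w z - K y z) * g z := by ring
    rw [e, abs_mul]
    have hsum0 : (0:ℝ) ≤ (nrm (z - (w.1, -w.2)))⁻¹ + (nrm (z - (y.1, -y.2)))⁻¹ +
        (nrm (z - w))⁻¹ + (nrm (z - y))⁻¹ := by
      have h1 := inv_nonneg.mpr (nrm_nonneg (z - (w.1, -w.2)))
      have h2 := inv_nonneg.mpr (nrm_nonneg (z - (y.1, -y.2)))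
      have h3 := inv_nonneg.mpr (nrm_nonneg (z - w))
      have h4 := inv_nonneg.mpr (nrm_nonneg (z - y))
      linarith
    calc |K w z - K y z| * |g z|
        ≤ (d * ((nrm (z - (w.1, -w.2)))⁻¹ + (nrm (z - (y.1, -y.2)))⁻¹ +
            (nrm (z - w))⁻¹ + (nrm (z - y))⁻¹)) * (CV * Cψ) :=
          mul_le_mul hK (hgb z hzS) (abs_nonneg _) (mul_nonneg hd0 hsum0)
      _ = G z := by rw [hGdef]; ring
  have hintd : IntegrableOn (fun z => |K w z * g z - K y z * g z|) S := by
    have h := ((key w hw2).sub (key y hy)).abs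
    simpa [Pi.sub_apply, IntegrableOn] using h
  have habs : |∫ z in S, (K w z * g z - K y z * g z)| ≤ ∫ z in S, G z := by
    have h1 : |∫ z in S, (K w z * g z - K y z * g z)|
        ≤ ∫ z in S, |K w z * g z - K y z * g z| := by
      simpa [Real.norm_eq_abs] using norm_integral_le_integral_norm
        (μ := volume.restrict S) (fun z => K w z * g z - K y z * g z)
    exact h1.trans (integral_mono_ae hintd hGint hptw)
  have hGsum : (∫ z in S, G z) ≤ CV * Cψ * d * (80 * ρ) := by
    have hpull : (∫ z in S, G z) = CV * Cψ * d *
        ∫ z in S, ((nrm (z - (w.1, -w.2)))⁻¹ + (nrm (z - (y.1, -y.2)))⁻¹ +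
          (nrm (z - w))⁻¹ + (nrm (z - y))⁻¹) := by
      simp only [hGdef]
      exact integral_const_mul _ _
    rw [hpull]
    have hi1 := inv_integrableOn (w.1, -w.2) c (r := ρ) hρ
    have hi2 := inv_integrableOn (y.1, -y.2) c (r := ρ) hρ
    have hi3 := inv_integrableOn w c (r := ρ) hρ
    have hi4 := inv_integrableOn y c (r := ρ) hρ
    have hi12 : IntegrableOn (fun z => (nrm (z - (w.1, -w.2)))⁻¹ +
        (nrm (z - (y.1, -y.2)))⁻¹) S := hi1.add hi2
    have hi123 : IntegrableOn (fun z => (nrm (z - (w.1, -w.2)))⁻¹ +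
        (nrm (z - (y.1, -y.2)))⁻¹ + (nrm (z - w))⁻¹) S := hi12.add hi3
    have hsplit : (∫ z in S, ((nrm (z - (w.1, -w.2)))⁻¹ + (nrm (z - (y.1, -y.2)))⁻¹ +
        (nrm (z - w))⁻¹ + (nrm (z - y))⁻¹))
        = (∫ z in S, (nrm (z - (w.1, -w.2)))⁻¹) + (∫ z in S, (nrm (z - (y.1, -y.2)))⁻¹) +
          (∫ z in S, (nrm (z - w))⁻¹) + ∫ z in S, (nrm (z - y))⁻¹ := by
      rw [integral_add hi123 hi4, integral_add hi12 hi3, integral_add hi1 hi2]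
    rw [hsplit]
    have b1 := inv_setIntegral_le (w.1, -w.2) c hρ
    have b2 := inv_setIntegral_le (y.1, -y.2) c hρ
    have b3 := inv_setIntegral_le w c hρ
    have b4 := inv_setIntegral_le y c hρ
    have hnn : 0 ≤ CV * Cψ * d := by positivity
    calc CV * Cψ * d * _ ≤ CV * Cψ * d * (20*ρ + 20*ρ + 20*ρ + 20*ρ) := by
          apply mul_le_mul_of_nonneg_left _ hnn
          linarith
      _ = CV * Cψ * d * (80 * ρ) := by ring
  have hpi1 : |1 / (2 * π)| ≤ 1 := by
    rw [abs_of_pos (by positivity)]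
    rw [div_le_one (by positivity)]
    linarith [Real.pi_gt_three]
  have hd2 : d ≤ 2 * ‖w - y‖ := nrm_le_sqrt2_norm _
  have hwn : (0:ℝ) ≤ ‖w - y‖ := norm_nonneg _
  calc |1 / (2 * π)| * |∫ z in S, (K w z * g z - K y z * g z)|
      ≤ 1 * (CV * Cψ * d * (80 * ρ)) := by
        apply mul_le_mul hpi1 (habs.trans hGsum) (abs_nonneg _) zero_le_one
    _ ≤ CV * Cψ * (2 * ‖w - y‖) * (80 * ρ) := by
        rw [one_mul]
        apply mul_le_mul_of_nonneg_right _ (by positivity)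
        apply mul_le_mul_of_nonneg_left hd2 (by positivity)
    _ = 160 / ρ * CV * ρ ^ 2 * Cψ * ‖w - y‖ := by
        field_simp
        ring
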